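/- Let n ≥ 2, let a_0, …, a_n be real numbers, let a ∈ [−1,1], and let γ = a + i·√(1−a²) ∈ ℂ, so that γ and its conjugate γ̄ are the two roots of X² − 2aX + 1 (γ + γ̄ = 2a and γ·γ̄ = 1). For a real number x define complex sequences by z_n(x) = a_n, u_n(x) = a_n, and for k = n−1 down to 1: z_k(x) = 2(x−a)·u_{k+1}(x) + γ·z_{k+1}(x) + a_k and u_k(x) = z_k(x) + γ̄·u_{k+1}(x). Then every u_k(x) is real, u_{n−1}(x) = 2x·u_n(x) + a_{n−1}, u_k(x) = 2x·u_{k+1}(x) − u_{k+2}(x) + a_k for 1 ≤ k ≤ n−2, and consequently x·u_1(x) − u_2(x) + a_0 = p(x). -/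
import Mathlib


open Polynomial Finset Complex

/-- The generalized Reinsch recurrence (with `γ = a + i√(1-a²)`) computes the
Clenshaw sequence: every `uₖ(x)` is real, the Clenshaw recurrence holds, and
`x·u₁(x) − u₂(x) + a₀ = p(x)`. -/
theorem generalized_reinsch_eq_clenshaw (n : ℕ) (hn : 2 ≤ n) (a : ℕ → ℝ)
    (c : ℝ) (hc : c ∈ Set.Icc (-1 : ℝ) 1) (γ : ℂ)
    (hγ : γ = (c : ℂ) + Complex.I * Real.sqrt (1 - c ^ 2))
    (x : ℝ) (z u : ℕ → ℂ)
    (hzn : z n = (a n : ℂ)) (hun : u n = (a n : ℂ))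
    (hrec : ∀ k, 1 ≤ k → k ≤ n - 1 →
      z k = 2 * ((x : ℂ) - (c : ℂ)) * u (k + 1) + γ * z (k + 1) + (a k : ℂ) ∧
      u k = z k + (starRingEnd ℂ) γ * u (k + 1)) :
    (∀ k, 1 ≤ k → k ≤ n → (u k).im = 0) ∧
    u (n - 1) = 2 * (x : ℂ) * u n + (a (n - 1) : ℂ) ∧
    (∀ k, 1 ≤ k → k ≤ n - 2 → u k = 2 * (x : ℂ) * u (k + 1) - u (k + 2) + (a k : ℂ)) ∧
    (x : ℂ) * u 1 - u 2 + (a 0 : ℂ) =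
      ((∑ i ∈ Finset.range (n + 1), a i * (Polynomial.Chebyshev.T ℝ i).eval x : ℝ) : ℂ) := by
  obtain ⟨hc1, hc2⟩ := hc
  have hs : (Real.sqrt (1 - c ^ 2) : ℝ) ^ 2 = 1 - c ^ 2 :=
    Real.sq_sqrt (by nlinarith)
  have hs' : ((Real.sqrt (1 - c ^ 2) : ℝ) : ℂ) ^ 2 = 1 - (c : ℂ) ^ 2 := by
    norm_cast
  have hconj : (starRingEnd ℂ) γ = (c : ℂ) - Complex.I * Real.sqrt (1 - c ^ 2) := by
    rw [hγ]
    simp [map_add, map_mul, Complex.conj_I, Complex.conj_ofReal]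
    ring
  have hsum : γ + (starRingEnd ℂ) γ = 2 * (c : ℂ) := by
    rw [hconj, hγ]; ring
  have hprod : γ * (starRingEnd ℂ) γ = 1 := by
    rw [hconj, hγ]
    linear_combination (-(Complex.I ^ 2)) * hs' + ((c:ℂ)^2 - 1) * Complex.I_sq
  -- Clenshaw recurrences
  have hu_last : u (n - 1) = 2 * (x : ℂ) * u n + (a (n - 1) : ℂ) := by
    obtain ⟨hz, hu⟩ := hrec (n - 1) (by omega) le_rfl
    have e : n - 1 + 1 = n := by omega
    rw [e] at hz hu
    rw [hzn] at hz
    rw [hun] at hz hu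
    rw [hun]
    linear_combination hu + hz + (a n : ℂ) * hsum
  have hu_rec : ∀ k, 1 ≤ k → k ≤ n - 2 →
      u k = 2 * (x : ℂ) * u (k + 1) - u (k + 2) + (a k : ℂ) := by
    intro k hk1 hk2
    obtain ⟨hz, hu⟩ := hrec k hk1 (by omega)
    obtain ⟨hz', hu'⟩ := hrec (k + 1) (by omega) (by omega)
    linear_combination hu + hz - γ * hu' + u (k + 1) * hsum - u (k + 2) * hprod
  -- realness
  have him : ∀ m k, 1 ≤ k → k ≤ n → n - k ≤ m → (u k).im = 0 := by
    intro m
    induction m using Nat.strong_induction_on with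
    | _ m ih =>
      intro k hk1 hk2 hkm
      rcases Nat.lt_or_ge k (n - 1) with hlt | hge
      · have h1 := ih (m - 1) (by omega) (k + 1) (by omega) (by omega) (by omega)
        have h2 := ih (m - 1) (by omega) (k + 2) (by omega) (by omega) (by omega)
        rw [hu_rec k hk1 (by omega)]
        simp [Complex.add_im, Complex.sub_im, Complex.mul_im, h1, h2]
      · rcases Nat.lt_or_ge k n with hlt' | hge'
        · have hk : k = n - 1 := by omega
          subst hk
          rw [hu_last, hun]
          simp [Complex.add_im, Complex.mul_im]
        · have hk : k = n := by omega
          subst hk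
          rw [hun]; simp
  refine ⟨fun k hk1 hk2 => him n k hk1 hk2 (by omega), hu_last, hu_rec, ?_⟩
  obtain ⟨n', rfl⟩ : ∃ n', n = n' + 2 := ⟨n - 2, by omega⟩
  have huv : ∀ k, 1 ≤ k → k ≤ n' + 2 → u k = ((u k).re : ℂ) := by
    intro k h1 h2
    have h := him (n' + 2) k h1 h2 (by omega)
    apply Complex.ext <;> simp [h]
  have hvn : (u (n' + 2)).re = a (n' + 2) := by rw [hun]; simp
  have hv_last : (u (n' + 1)).re = 2 * x * a (n' + 2) + a (n' + 1) := by
    have h : u (n' + 1) = ((2 * x * a (n' + 2) + a (n' + 1) : ℝ) : ℂ) := by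
      have e : n' + 2 - 1 = n' + 1 := rfl
      rw [← e, hu_last, hun]; push_cast; ring
    have := congrArg Complex.re h
    simpa using this
  have hv_rec : ∀ k, 1 ≤ k → k ≤ n' →
      (u k).re = 2 * x * (u (k + 1)).re - (u (k + 2)).re + a k := by
    intro k hk1 hk2
    have h := hu_rec k hk1 (by omega)
    rw [huv (k + 1) (by omega) (by omega), huv (k + 2) (by omega) (by omega)] at h
    have h2 : u k = ((2 * x * (u (k + 1)).re - (u (k + 2)).re + a k : ℝ) : ℂ) := by
      rw [h]; push_cast; ring
    have := congrArg Complex.re h2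
    simpa using this
  have hT : ∀ k : ℕ, (Polynomial.Chebyshev.T ℝ (k + 2 : ℕ)).eval x =
      2 * x * (Polynomial.Chebyshev.T ℝ (k + 1 : ℕ)).eval x
        - (Polynomial.Chebyshev.T ℝ (k : ℕ)).eval x := by
    intro k
    have e1 : ((k + 2 : ℕ) : ℤ) = (k : ℤ) + 2 := by push_cast; ring
    have e2 : ((k + 1 : ℕ) : ℤ) = (k : ℤ) + 1 := by push_cast; ring
    rw [e1, e2, Polynomial.Chebyshev.T_add_two]
    simp
  have key : ∀ j, j ≤ n' →
      (∑ i ∈ Finset.range (n' + 2 + 1), a i * (Polynomial.Chebyshev.T ℝ i).eval x) =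
        (∑ i ∈ Finset.range (n' + 1 - j), a i * (Polynomial.Chebyshev.T ℝ i).eval x)
          + (u (n' + 1 - j)).re * (Polynomial.Chebyshev.T ℝ (n' + 1 - j : ℕ)).eval x
          - (u (n' + 2 - j)).re * (Polynomial.Chebyshev.T ℝ (n' - j : ℕ)).eval x := by
    intro j
    induction j with
    | zero =>
      intro _
      simp only [Nat.sub_zero]
      rw [Finset.sum_range_succ, Finset.sum_range_succ, hv_last, hvn, hT n']
      ring
    | succ j ihj =>
      intro hj
      have ih := ihj (by omega)
      obtain ⟨k, hk⟩ : ∃ k, n' - (j + 1) = k := ⟨_, rfl⟩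
      have e1 : n' + 1 - j = k + 2 := by omega
      have e2 : n' + 2 - j = k + 3 := by omega
      have e3 : n' - j = k + 1 := by omega
      have e4 : n' + 1 - (j + 1) = k + 1 := by omega
      have e5 : n' + 2 - (j + 1) = k + 2 := by omega
      rw [e1, e2, e3] at ih
      rw [e4, e5, hk, ih, Finset.sum_range_succ, hT k,
        hv_rec (k + 1) (by omega) (by omega)]
      ring
  have hkey := key n' le_rfl
  have e1 : n' + 1 - n' = 1 := by omega
  have e2 : n' + 2 - n' = 2 := by omega
  have e3 : n' - n' = 0 := by omega
  rw [e1, e2, e3] at hkey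
  simp only [Finset.sum_range_one, Nat.cast_zero, Nat.cast_one,
    Polynomial.Chebyshev.T_zero, Polynomial.Chebyshev.T_one, Polynomial.eval_one,
    Polynomial.eval_X, mul_one] at hkey
  rw [huv 1 (by omega) (by omega), huv 2 (by omega) (by omega), hkey]
  push_cast
  ring
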